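/- arXiv:2510.26199 — 2 statements merged into one kernel-verified Lean document; each statement's English description precedes it below -/
import Mathlib

section
/- Let 𝒯 be a Hom-finite triangulated category over a field and E, F ∈ 𝒯 objects satisfying Hom(E, E[i]) = 0 for i > 0, Hom(F, F[i]) = 0 for i > 0, Hom(F, E[i]) = 0 for i > 0, and Hom(E, F[i]) = 0 for i > 1. Let Ē be the cone of a left (add F)-approximation E[-1] → F_0, so there is a triangle E[-1] → F_0 → Ē → E. Then Hom(Ē, Ē[i]) = 0, Hom(F, Ē[i]) = 0 and Hom(Ē, F[i]) = 0 for all i > 0. -/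
open CategoryTheory CategoryTheory.Limits CategoryTheory.Pretriangulated

/-- `X` belongs to `add F`: it is a direct summand of a finite direct sum of
copies of `F`. -/
def InAdd {C : Type*} [Category C] [Preadditive C] [HasFiniteBiproducts C]
    (F X : C) : Prop :=
  ∃ (n : ℕ) (i : X ⟶ ⨁ (fun _ : Fin n => F)) (p : (⨁ fun _ : Fin n => F) ⟶ X),
    i ≫ p = 𝟙 X

section Helpers
variable {C : Type} [Category.{0} C] [Preadditive C] [HasFiniteBiproducts C]

lemma inAdd_self (F : C) : InAdd F F :=
  ⟨1, biproduct.ι (fun _ : Fin 1 => F) 0, biproduct.π (fun _ : Fin 1 => F) 0, by simp⟩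

lemma fromAdd₀ {F F₀ X : C} (h : InAdd F F₀) (hv : ∀ g : F ⟶ X, g = 0)
    (f : F₀ ⟶ X) : f = 0 := by
  obtain ⟨m, i, p, hip⟩ := h
  have hpf : p ≫ f = 0 := by ext j; simp [hv]
  calc f = (i ≫ p) ≫ f := by rw [hip, Category.id_comp]
  _ = i ≫ (p ≫ f) := by rw [Category.assoc]
  _ = 0 := by rw [hpf, Limits.comp_zero]

variable [HasShift C ℤ] [∀ n : ℤ, (CategoryTheory.shiftFunctor C n).Additive]

lemma fromAddShift {F F₀ X : C} (n : ℤ) (h : InAdd F F₀)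
    (hv : ∀ g : F⟦n⟧ ⟶ X, g = 0) (f : F₀⟦n⟧ ⟶ X) : f = 0 := by
  obtain ⟨m, i, p, hip⟩ := h
  have key : ∀ g : (⨁ fun _ : Fin m => F)⟦n⟧ ⟶ X, g = 0 := by
    intro g
    have h1 : (𝟙 (⨁ fun _ : Fin m => F) : _)⟦n⟧' ≫ g = g := by simp
    rw [← h1, ← biproduct.total, Functor.map_sum, Preadditive.sum_comp]
    refine Finset.sum_eq_zero (fun j _ => ?_)
    rw [Functor.map_comp, Category.assoc, hv ((biproduct.ι (fun _ : Fin m => F) j)⟦n⟧' ≫ g),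
      Limits.comp_zero]
  calc f = (i ≫ p)⟦n⟧' ≫ f := by rw [hip, CategoryTheory.Functor.map_id, Category.id_comp]
  _ = i⟦n⟧' ≫ (p⟦n⟧' ≫ f) := by rw [Functor.map_comp, Category.assoc]
  _ = 0 := by rw [key (p⟦n⟧' ≫ f), Limits.comp_zero]

lemma toAddShift {F F₀ X : C} (n : ℤ) (h : InAdd F F₀)
    (hv : ∀ g : X ⟶ F⟦n⟧, g = 0) (f : X ⟶ F₀⟦n⟧) : f = 0 := by
  obtain ⟨m, i, p, hip⟩ := h
  have key : ∀ g : X ⟶ (⨁ fun _ : Fin m => F)⟦n⟧, g = 0 := by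
    intro g
    have h1 : g ≫ (𝟙 (⨁ fun _ : Fin m => F) : _)⟦n⟧' = g := by simp
    rw [← h1, ← biproduct.total, Functor.map_sum, Preadditive.comp_sum]
    refine Finset.sum_eq_zero (fun j _ => ?_)
    rw [Functor.map_comp, ← Category.assoc, hv (g ≫ (biproduct.π (fun _ : Fin m => F) j)⟦n⟧'),
      Limits.zero_comp]
  calc f = f ≫ (i ≫ p)⟦n⟧' := by rw [hip, CategoryTheory.Functor.map_id, Category.comp_id]
  _ = (f ≫ i⟦n⟧') ≫ p⟦n⟧' := by rw [Functor.map_comp, ← Category.assoc]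
  _ = 0 := by rw [key (f ≫ i⟦n⟧'), Limits.zero_comp]

end Helpers

/-- Proposition `univan`, universal extension part: in a
Hom-finite triangulated category `𝒯` over a field `k`, if `E, F` satisfy
`Hom(E,E[>0]) = Hom(F,F[>0]) = Hom(F,E[>0]) = 0` and `Hom(E,F[>1]) = 0`, and
`Ē` is the cone of a left `add F`-approximation `E[-1] → F₀`, sitting in a
distinguished triangle `E[-1] → F₀ → Ē → E`, then
`Hom(Ē,Ē[>0]) = Hom(F,Ē[>0]) = Hom(Ē,F[>0]) = 0`. -/
theorem universal_extension_vanishing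
    (k : Type) [Field k] (C : Type) [Category.{0} C] [Preadditive C]
    [Linear k C] [HasZeroObject C] [HasShift C ℤ]
    [∀ n : ℤ, (CategoryTheory.shiftFunctor C n).Additive] [Pretriangulated C]
    [HasFiniteBiproducts C]
    (homFinite : ∀ X Y : C, FiniteDimensional k (X ⟶ Y))
    (E F F₀ Ebar : C)
    (hEE : ∀ i : ℤ, 0 < i → ∀ f : E ⟶ E⟦i⟧, f = 0)
    (hFF : ∀ i : ℤ, 0 < i → ∀ f : F ⟶ F⟦i⟧, f = 0)
    (hFE : ∀ i : ℤ, 0 < i → ∀ f : F ⟶ E⟦i⟧, f = 0)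
    (hEF : ∀ i : ℤ, 1 < i → ∀ f : E ⟶ F⟦i⟧, f = 0)
    (a : E⟦(-1 : ℤ)⟧ ⟶ F₀) (hF₀ : InAdd F F₀)
    (happrox : ∀ F' : C, InAdd F F' → ∀ g : E⟦(-1 : ℤ)⟧ ⟶ F',
      ∃ h : F₀ ⟶ F', a ≫ h = g)
    (b : F₀ ⟶ Ebar) (c : Ebar ⟶ (E⟦(-1 : ℤ)⟧)⟦(1 : ℤ)⟧)
    (htri : Triangle.mk a b c ∈ distinguishedTriangles) :
    (∀ i : ℤ, 0 < i → ∀ f : Ebar ⟶ Ebar⟦i⟧, f = 0) ∧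
      (∀ i : ℤ, 0 < i → ∀ f : F ⟶ Ebar⟦i⟧, f = 0) ∧
      (∀ i : ℤ, 0 < i → ∀ f : Ebar ⟶ F⟦i⟧, f = 0) := by
  have pf : (-1 : ℤ) + 1 = 0 := by norm_num
  set ι := shiftFunctorCompIsoId C (-1 : ℤ) (1 : ℤ) pf with hι
  -- e : E⟦-1⟧⟦1⟧ ≅ E
  let e : (E⟦(-1 : ℤ)⟧)⟦(1 : ℤ)⟧ ≅ E := ι.app E
  -- Step A : Hom(Ebar, E⟦i⟧) = 0 for i > 0
  have hEbarE : ∀ i : ℤ, 0 < i → ∀ f : Ebar ⟶ E⟦i⟧, f = 0 := by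
    intro i hi f
    have hbf : b ≫ f = 0 := fromAdd₀ hF₀ (fun g => hFE i hi g) _
    obtain ⟨g, hg⟩ := Triangle.yoneda_exact₃ _ htri f hbf
    have h0 : e.inv ≫ g = 0 := hEE i hi _
    have hge : g = e.hom ≫ (e.inv ≫ g) := (e.hom_inv_id_assoc g).symm
    rw [hg, hge, h0, Limits.comp_zero]; exact Limits.comp_zero
  -- Step B : Hom(Ebar, F⟦i⟧) = 0 for i > 0
  have hEbarF : ∀ i : ℤ, 0 < i → ∀ f : Ebar ⟶ F⟦i⟧, f = 0 := by
    intro i hi f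
    have hbf : b ≫ f = 0 := fromAdd₀ hF₀ (fun g => hFF i hi g) _
    obtain ⟨g, hg⟩ := Triangle.yoneda_exact₃ _ htri f hbf
    have hge : g = e.hom ≫ (e.inv ≫ g) := (e.hom_inv_id_assoc g).symm
    rcases lt_or_ge 1 i with h1 | h1
    · have h0 : e.inv ≫ g = 0 := hEF i h1 _
      rw [hg, hge, h0, Limits.comp_zero]; exact Limits.comp_zero
    · have hi1 : i = 1 := le_antisymm h1 hi
      subst hi1
      set h : E ⟶ F⟦(1 : ℤ)⟧ := e.inv ≫ g with hh
      let φ : (F⟦(1 : ℤ)⟧)⟦(-1 : ℤ)⟧ ≅ F :=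
        (shiftFunctorCompIsoId C (1 : ℤ) (-1 : ℤ) (by norm_num)).app F
      obtain ⟨q, hq⟩ := happrox F (inAdd_self F) (h⟦(-1 : ℤ)⟧' ≫ φ.hom)
      have hmap : h⟦(-1 : ℤ)⟧' = a ≫ q ≫ φ.inv := by
        rw [← Category.assoc, hq, Category.assoc, φ.hom_inv_id, Category.comp_id]
      have hca : c ≫ a⟦(1 : ℤ)⟧' = 0 := comp_distTriang_mor_zero₃₁ _ htri
      have hnat : (h⟦(-1 : ℤ)⟧')⟦(1 : ℤ)⟧' ≫ ι.hom.app (F⟦(1 : ℤ)⟧) = e.hom ≫ h := by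
        exact ι.hom.naturality h
      have heh : e.hom ≫ h = a⟦(1 : ℤ)⟧' ≫ ((q ≫ φ.inv)⟦(1 : ℤ)⟧' ≫ ι.hom.app (F⟦(1 : ℤ)⟧)) := by
        rw [← hnat, hmap, Functor.map_comp, Category.assoc]
      have hg' : f = c ≫ g := hg
      rw [hg', hge, heh, ← Category.assoc, hca, Limits.zero_comp]
  -- Step C : Hom(Ebar, Ebar⟦i⟧) = 0 for i > 0
  have hEbarEbar : ∀ i : ℤ, 0 < i → ∀ f : Ebar ⟶ Ebar⟦i⟧, f = 0 := by
    intro i hi f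
    have htri' : (Triangle.shiftFunctor C i).obj (Triangle.mk a b c) ∈ distinguishedTriangles :=
      Triangle.shift_distinguished _ htri i
    have hfc : f ≫ c⟦i⟧' = 0 := by
      have h1 : f ≫ c⟦i⟧' = (f ≫ c⟦i⟧' ≫ (e.hom)⟦i⟧') ≫ (e.inv)⟦i⟧' := by
        rw [Category.assoc, Category.assoc, ← Functor.map_comp, e.hom_inv_id,
          CategoryTheory.Functor.map_id, Category.comp_id]
      rw [h1, hEbarE i hi (f ≫ c⟦i⟧' ≫ (e.hom)⟦i⟧'), Limits.zero_comp]
    have hf3 : f ≫ ((Triangle.shiftFunctor C i).obj (Triangle.mk a b c)).mor₃ = 0 := by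
      change f ≫ (i.negOnePow • (c⟦i⟧' ≫ (shiftFunctorComm C 1 i).hom.app _)) = 0
      rw [Linear.comp_units_smul, ← Category.assoc, hfc, Limits.zero_comp, smul_zero]
    obtain ⟨g, hg⟩ := Triangle.coyoneda_exact₃ _ htri' f hf3
    have hg0 : g = 0 := toAddShift i hF₀ (fun u => hEbarF i hi u) g
    rw [hg, hg0, Limits.zero_comp]; rfl
  -- Step D : Hom(F, Ebar⟦i⟧) = 0 for i > 0
  have hFEbar : ∀ i : ℤ, 0 < i → ∀ f : F ⟶ Ebar⟦i⟧, f = 0 := by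
    intro i hi f
    have htri' : (Triangle.shiftFunctor C i).obj (Triangle.mk a b c) ∈ distinguishedTriangles :=
      Triangle.shift_distinguished _ htri i
    have hfc : f ≫ c⟦i⟧' = 0 := by
      have h1 : f ≫ c⟦i⟧' = (f ≫ c⟦i⟧' ≫ (e.hom)⟦i⟧') ≫ (e.inv)⟦i⟧' := by
        rw [Category.assoc, Category.assoc, ← Functor.map_comp, e.hom_inv_id,
          CategoryTheory.Functor.map_id, Category.comp_id]
      rw [h1, hFE i hi (f ≫ c⟦i⟧' ≫ (e.hom)⟦i⟧'), Limits.zero_comp]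
    have hf3 : f ≫ ((Triangle.shiftFunctor C i).obj (Triangle.mk a b c)).mor₃ = 0 := by
      change f ≫ (i.negOnePow • (c⟦i⟧' ≫ (shiftFunctorComm C 1 i).hom.app _)) = 0
      rw [Linear.comp_units_smul, ← Category.assoc, hfc, Limits.zero_comp, smul_zero]
    obtain ⟨g, hg⟩ := Triangle.coyoneda_exact₃ _ htri' f hf3
    have hg0 : g = 0 := toAddShift i hF₀ (fun u => hFF i hi u) g
    rw [hg, hg0, Limits.zero_comp]; rfl
  exact ⟨hEbarEbar, hFEbar, hEbarF⟩
end

section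
/- Let 𝒯 be a Hom-finite Krull–Schmidt triangulated category and E, F indecomposable objects with Hom(E,E[>0]) = Hom(F,F[>0]) = Hom(F,E[≥0]) = 0, Hom(E,F[>1]) = 0, and E ≇ F[1]. Let Ē be the universal extension of E by F. Then Ē ≅ Ē_0^{⊕m} ⊕ F^{⊕n} for some indecomposable object Ē_0, some m ≥ 1 and n ≥ 0. In particular Ē ⊕ F has exactly two indecomposable direct summands up to isomorphism. -/
open CategoryTheory CategoryTheory.Limits CategoryTheory.Pretriangulated

/-- an object is indecomposable if it is nonzero and any biproduct
decomposition has a zero factor -/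
def IndecObj {C : Type*} [Category C] [Preadditive C] [HasZeroObject C]
    [HasBinaryBiproducts C] (X : C) : Prop :=
  ¬ IsZero X ∧ ∀ (Y Z : C), (X ≅ Y ⊞ Z) → IsZero Y ∨ IsZero Z

section AuxRing

/-- noncommutative version: in a local ring a unit sum has a unit summand -/
lemma aux_isUnit_add {R : Type*} [Ring R] [IsLocalRing R] {x y : R}
    (h : IsUnit (x + y)) : IsUnit x ∨ IsUnit y := by
  obtain ⟨u, hu⟩ := h
  have h1 : ((u⁻¹ : Rˣ) : R) * x + ((u⁻¹ : Rˣ) : R) * y = 1 := by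
    rw [← mul_add, ← hu, Units.inv_mul]
  rcases IsLocalRing.isUnit_or_isUnit_of_add_one h1 with h2 | h2
  · left
    have := (Units.isUnit u).mul h2
    rwa [Units.mul_inv_cancel_left] at this
  · right
    have := (Units.isUnit u).mul h2
    rwa [Units.mul_inv_cancel_left] at this

lemma aux_sum_isUnit {R : Type*} [Ring R] [IsLocalRing R] {ι : Type*}
    (s : Finset ι) (f : ι → R) (h : IsUnit (∑ i ∈ s, f i)) :
    ∃ i ∈ s, IsUnit (f i) := by
  classical
  induction s using Finset.induction with
  | empty =>
      rw [Finset.sum_empty] at h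
      exact absurd (isUnit_zero_iff.mp h) zero_ne_one
  | insert _ _ hni ih =>
      rw [Finset.sum_insert hni] at h
      rcases aux_isUnit_add h with h1 | h1
      · exact ⟨_, Finset.mem_insert_self _ _, h1⟩
      · obtain ⟨i, hi, hu⟩ := ih h1
        exact ⟨i, Finset.mem_insert_of_mem hi, hu⟩

end AuxRing

/-- view an endomorphism as an element of the endomorphism ring -/
def endOf {C : Type*} [Category C] {X : C} (f : X ⟶ X) : End X := f

section AuxRetract

variable {C : Type} [Category.{0} C] [Preadditive C] [HasZeroObject C]
  [HasFiniteBiproducts C]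

/-- an indecomposable-with-local-endos retract of `add F` (F with local
endomorphism ring) is isomorphic to `F`. -/
lemma aux_retract_iso (F X : C) (hX : ¬ IsZero X)
    (hXl : IsLocalRing (End X)) (hFl : IsLocalRing (End F))
    (h : InAdd F X) : Nonempty (X ≅ F) := by
  classical
  obtain ⟨n, i, p, hip⟩ := h
  have htot : (∑ t : Fin n,
      (i ≫ biproduct.π (fun _ : Fin n => F) t) ≫
        (biproduct.ι (fun _ : Fin n => F) t ≫ p)) = 𝟙 X := by
    calc (∑ t : Fin n, (i ≫ biproduct.π (fun _ : Fin n => F) t) ≫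
          (biproduct.ι (fun _ : Fin n => F) t ≫ p))
        = i ≫ (∑ t : Fin n, biproduct.π (fun _ : Fin n => F) t ≫
            biproduct.ι (fun _ : Fin n => F) t) ≫ p := by
          rw [Preadditive.sum_comp, Preadditive.comp_sum]
          simp [Category.assoc]
      _ = 𝟙 X := by rw [biproduct.total]; simp [hip]
  -- some summand is a unit in End X
  haveI := hXl
  have hsum : (∑ t ∈ Finset.univ, (fun t : Fin n =>
      (endOf ((i ≫ biproduct.π (fun _ : Fin n => F) t) ≫
        (biproduct.ι (fun _ : Fin n => F) t ≫ p)))) t) = (1 : End X) := htot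
  have hunit : IsUnit (∑ t ∈ Finset.univ, (fun t : Fin n =>
      (endOf ((i ≫ biproduct.π (fun _ : Fin n => F) t) ≫
        (biproduct.ι (fun _ : Fin n => F) t ≫ p)))) t) := by
    rw [hsum]; exact isUnit_one
  obtain ⟨t, _, hu⟩ := aux_sum_isUnit Finset.univ _ hunit
  set q : X ⟶ F := i ≫ biproduct.π (fun _ : Fin n => F) t with hq
  set r0 : F ⟶ X := biproduct.ι (fun _ : Fin n => F) t ≫ p with hr0
  haveI hiso : IsIso (q ≫ r0) := (isUnit_iff_isIso _).mp hu
  set r : F ⟶ X := r0 ≫ inv (q ≫ r0) with hr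
  have hqr : q ≫ r = 𝟙 X := by
    rw [hr, ← Category.assoc]
    exact IsIso.hom_inv_id _
  set e : End F := r ≫ q with he
  have hee : e * e = e := by
    show (r ≫ q) ≫ (r ≫ q) = r ≫ q
    rw [Category.assoc, ← Category.assoc q r q, hqr, Category.id_comp]
  haveI := hFl
  rcases IsLocalRing.isUnit_or_isUnit_of_add_one
      (a := e) (b := 1 - e) (by abel) with h1 | h1
  · -- e is a unit idempotent, hence 1
    have he1 : e = 1 := h1.mul_left_cancel (by rw [mul_one]; exact hee)
    have hrq : r ≫ q = 𝟙 F := he1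
    exact ⟨⟨q, r, hqr, hrq⟩⟩
  · -- 1 - e is a unit idempotent, hence 1, so e = 0 and X is zero: contradiction
    have hee' : (1 - e) * (1 - e) = 1 - e := by
      have : (1 - e) * (1 - e) = 1 - e - e + e * e := by noncomm_ring
      rw [this, hee]; abel
    have h2 : (1 : End F) - e = 1 := h1.mul_left_cancel (by rw [mul_one]; exact hee')
    have he0 : e = 0 := by
      have := sub_eq_iff_eq_add.mp h2; simpa using this.symm
    exfalso
    apply hX
    rw [IsZero.iff_id_eq_zero]
    have hz : r ≫ q = 0 := he0
    calc 𝟙 X = (q ≫ r) ≫ (q ≫ r) := by rw [hqr, Category.id_comp]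
      _ = q ≫ (r ≫ q) ≫ r := by simp only [Category.assoc]
      _ = 0 := by rw [hz, zero_comp, comp_zero]

end AuxRetract

section AuxBiprod

variable {C : Type} [Category.{0} C] [Preadditive C] [HasFiniteBiproducts C]
  [HasBinaryBiproducts C]

lemma aux_biproduct_split {n : ℕ} (Z : Fin (n + 1) → C) (i₀ : Fin (n + 1)) (F : C)
    (hiso : ∀ j : Fin n, Z (i₀.succAbove j) ≅ F) :
    Nonempty (⨁ Z ≅ (⨁ fun _ : Fin 1 => Z i₀) ⊞ (⨁ fun _ : Fin n => F)) := by
  classical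
  refine ⟨⟨biprod.lift (biproduct.lift fun _ => biproduct.π Z i₀)
      (biproduct.lift fun j => biproduct.π Z (i₀.succAbove j) ≫ (hiso j).hom),
    biprod.desc (biproduct.desc fun _ => biproduct.ι Z i₀)
      (biproduct.desc fun j => (hiso j).inv ≫ biproduct.ι Z (i₀.succAbove j)), ?_, ?_⟩⟩
  · rw [biprod.lift_desc, biproduct.lift_desc, biproduct.lift_desc]
    have h1 : (∑ _j : Fin 1, biproduct.π Z i₀ ≫ biproduct.ι Z i₀) =
        biproduct.π Z i₀ ≫ biproduct.ι Z i₀ := by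
      simp [Fin.sum_univ_one]
    have h2 : (∑ j : Fin n, (biproduct.π Z (i₀.succAbove j) ≫ (hiso j).hom) ≫
        ((hiso j).inv ≫ biproduct.ι Z (i₀.succAbove j))) =
        ∑ j : Fin n, biproduct.π Z (i₀.succAbove j) ≫ biproduct.ι Z (i₀.succAbove j) := by
      apply Finset.sum_congr rfl
      intro j _
      simp
    rw [h1, h2, ← Fin.sum_univ_succAbove
      (fun t => biproduct.π Z t ≫ biproduct.ι Z t) i₀, biproduct.total]
  · apply biprod.hom_ext'
    · apply biproduct.hom_ext'
      intro _
      apply biprod.hom_ext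
      · apply biproduct.hom_ext
        intro j2
        rename_i j1
        obtain rfl := Subsingleton.elim j1 j2
        simp
      · apply biproduct.hom_ext
        intro j
        simp [biproduct.ι_π_ne_assoc Z (Fin.succAbove_ne i₀ j).symm]
    · apply biproduct.hom_ext'
      intro j
      apply biprod.hom_ext
      · apply biproduct.hom_ext
        intro _
        simp [biproduct.ι_π_ne Z (Fin.succAbove_ne i₀ j)]
      · apply biproduct.hom_ext
        intro j'
        by_cases hjj : j = j'
        · subst hjj
          simp
        · have : i₀.succAbove j ≠ i₀.succAbove j' := by
            intro hc
            exact hjj (Fin.succAbove_right_injective hc)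
          simp [biproduct.ι_π_ne_assoc Z this, biproduct.ι_π_ne _ hjj]

end AuxBiprod

section AuxShift

variable {C : Type} [Category.{0} C] [Preadditive C] [HasZeroObject C]
  [HasShift C ℤ] [∀ n : ℤ, (CategoryTheory.shiftFunctor C n).Additive]
  [HasFiniteBiproducts C] [HasBinaryBiproducts C]

lemma aux_isZero_of_shift (X : C) (hz : IsZero (X⟦(1 : ℤ)⟧)) : IsZero X := by
  have h2 : IsZero ((X⟦(1 : ℤ)⟧)⟦(-1 : ℤ)⟧) :=
    Functor.map_isZero (shiftFunctor C (-1 : ℤ)) hz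
  exact h2.of_iso (shiftShiftNeg X 1).symm

lemma aux_indec_shift (E : C) (hE : IndecObj E) : IndecObj (E⟦(-1 : ℤ)⟧) := by
  constructor
  · intro hz
    apply hE.1
    have h2 : IsZero ((E⟦(-1 : ℤ)⟧)⟦(1 : ℤ)⟧) :=
      Functor.map_isZero (shiftFunctor C (1 : ℤ)) hz
    exact h2.of_iso (shiftNegShift E 1).symm
  · intro Y W hYW
    haveI : PreservesBinaryBiproduct Y W (shiftFunctor C (1 : ℤ)) :=
      preservesBinaryBiproduct_of_preservesBiproduct _ Y W
    have hE2 := hE.2 (Y⟦(1 : ℤ)⟧) (W⟦(1 : ℤ)⟧)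
      ((shiftNegShift E 1).symm ≪≫ (shiftFunctor C (1 : ℤ)).mapIso hYW ≪≫
        (shiftFunctor C (1 : ℤ)).mapBiprod Y W)
    rcases hE2 with h | h
    · exact Or.inl (aux_isZero_of_shift Y h)
    · exact Or.inr (aux_isZero_of_shift W h)

end AuxShift

/-- Proposition `uniind`(1): in a Hom-finite Krull–Schmidt
triangulated category, for indecomposable `E, F` with
`Hom(E,E[>0]) = Hom(F,F[>0]) = Hom(F,E[≥0]) = 0`, `Hom(E,F[>1]) = 0` and
`E ≇ F[1]`, the universal extension `Ē` of `E` by `F` satisfies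
`Ē ≅ Ē₀^{⊕m} ⊕ F^{⊕n}` with `Ē₀` indecomposable, `m ≥ 1`, `n ≥ 0`; in
particular `Ē ⊕ F` has exactly two indecomposable summands up to isomorphism. -/
theorem universal_extension_decomposition
    (k : Type) [Field k] (C : Type) [Category.{0} C] [Preadditive C]
    [Linear k C] [HasZeroObject C] [HasShift C ℤ]
    [∀ n : ℤ, (CategoryTheory.shiftFunctor C n).Additive] [Pretriangulated C]
    [HasFiniteBiproducts C]
    (homFinite : ∀ X Y : C, FiniteDimensional k (X ⟶ Y))
    -- the Krull–Schmidt property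
    (hKS : ∀ X : C, ∃ (n : ℕ) (f : Fin n → C),
      (∀ i, IndecObj (f i)) ∧ Nonempty (X ≅ ⨁ f))
    (hlocal : ∀ X : C, IndecObj X → IsLocalRing (End X))
    (E F F₀ Ebar : C) (hE : IndecObj E) (hF : IndecObj F)
    (hEE : ∀ i : ℤ, 0 < i → ∀ f : E ⟶ E⟦i⟧, f = 0)
    (hFF : ∀ i : ℤ, 0 < i → ∀ f : F ⟶ F⟦i⟧, f = 0)
    (hFE : ∀ i : ℤ, 0 < i → ∀ f : F ⟶ E⟦i⟧, f = 0)
    (hFE0 : ∀ f : F ⟶ E, f = 0)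
    (hEF : ∀ i : ℤ, 1 < i → ∀ f : E ⟶ F⟦i⟧, f = 0)
    (hne : IsEmpty (E ≅ F⟦(1 : ℤ)⟧))
    (a : E⟦(-1 : ℤ)⟧ ⟶ F₀) (hF₀ : InAdd F F₀)
    (happrox : ∀ F' : C, InAdd F F' → ∀ g : E⟦(-1 : ℤ)⟧ ⟶ F',
      ∃ h : F₀ ⟶ F', a ≫ h = g)
    (b : F₀ ⟶ Ebar) (c : Ebar ⟶ (E⟦(-1 : ℤ)⟧)⟦(1 : ℤ)⟧)
    (htri : Triangle.mk a b c ∈ distinguishedTriangles) :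
    ∃ (Ebar₀ : C) (m n : ℕ), IndecObj Ebar₀ ∧ 1 ≤ m ∧
      Nonempty (Ebar ≅ (⨁ fun _ : Fin m => Ebar₀) ⊞ (⨁ fun _ : Fin n => F)) := by
  classical
  haveI : HasBinaryBiproducts C := hasBinaryBiproducts_of_finite_biproducts C
  obtain ⟨N, Z, hZind, ⟨e⟩⟩ := hKS Ebar
  -- the canonical map Ebar ⟶ E
  set σ : (E⟦(-1 : ℤ)⟧)⟦(1 : ℤ)⟧ ≅ E := shiftNegShift E 1 with hσ
  set d : Ebar ⟶ E := c ≫ σ.hom with hd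
  -- Hom(F₀, E) = 0
  have hF₀E : ∀ g : F₀ ⟶ E, g = 0 := by
    intro g
    obtain ⟨nn, ii, pp, hipp⟩ := hF₀
    have hpg : pp ≫ g = 0 := by
      apply biproduct.hom_ext'
      intro t
      rw [← Category.assoc, comp_zero]
      exact hFE0 _
    calc g = (ii ≫ pp) ≫ g := by rw [hipp, Category.id_comp]
      _ = ii ≫ (pp ≫ g) := by rw [Category.assoc]
      _ = 0 := by rw [hpg, comp_zero]
  -- every map Ebar ⟶ E factors through d
  have hfact : ∀ f : Ebar ⟶ E, ∃ φ : E ⟶ E, f = d ≫ φ := by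
    intro f
    obtain ⟨g, hg⟩ := Triangle.yoneda_exact₃ _ htri f (by
      have : (Triangle.mk a b c).mor₂ ≫ f = b ≫ f := rfl
      rw [this, hF₀E (b ≫ f)]; rfl)
    refine ⟨σ.inv ≫ g, ?_⟩
    rw [hg, hd]
    simp only [Category.assoc, Iso.hom_inv_id_assoc]
    exact (congrArg (fun x => c ≫ x) (σ.hom_inv_id_assoc g)).symm
  -- inclusions and projections of the summands
  set incl : ∀ j : Fin N, (Z j ⟶ Ebar) := fun j => biproduct.ι Z j ≫ e.inv with hincl
  set proj : ∀ j : Fin N, (Ebar ⟶ Z j) := fun j => e.hom ≫ biproduct.π Z j with hproj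
  have hip : ∀ j, incl j ≫ proj j = 𝟙 (Z j) := by
    intro j
    rw [hincl, hproj]
    simp [biproduct.ι_π_self]
  have hij : ∀ j j', j ≠ j' → incl j ≫ proj j' = 0 := by
    intro j j' hjj
    rw [hincl, hproj]
    simp [biproduct.ι_π_ne Z hjj]
  -- summands killed by d are isomorphic to F
  have hZF : ∀ j, incl j ≫ d = 0 → Nonempty (Z j ≅ F) := by
    intro j hj
    have hc0 : incl j ≫ c = 0 := by
      have : incl j ≫ c = (incl j ≫ d) ≫ σ.inv := by
        rw [hd]; simp only [Category.assoc, Iso.hom_inv_id, Category.comp_id]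
      rw [this, hj, zero_comp]
    obtain ⟨s, hs⟩ : ∃ s : Z j ⟶ F₀, incl j = s ≫ b := Triangle.coyoneda_exact₃ _ htri (incl j) hc0
    obtain ⟨nn, ii, pp, hipp⟩ := hF₀
    refine aux_retract_iso F (Z j) (hZind j).1 (hlocal _ (hZind j)) (hlocal F hF)
      ⟨nn, s ≫ ii, pp ≫ b ≫ proj j, ?_⟩
    have : (Triangle.mk a b c).mor₂ = b := rfl
    calc (s ≫ ii) ≫ pp ≫ b ≫ proj j = s ≫ (ii ≫ pp) ≫ b ≫ proj j := by
          simp only [Category.assoc]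
      _ = s ≫ b ≫ proj j := by rw [hipp]; simp
      _ = incl j ≫ proj j := by rw [hs, Category.assoc]
      _ = 𝟙 (Z j) := hip j
  haveI hlocE : IsLocalRing (End E) := hlocal E hE
  by_cases hex : ∃ i₀ : Fin N, incl i₀ ≫ d ≠ 0
  · -- main case: a distinguished summand
    obtain ⟨i₀, hi₀⟩ := hex
    have hothers : ∀ j, j ≠ i₀ → Nonempty (Z j ≅ F) := by
      obtain ⟨α, hα⟩ := hfact (proj i₀ ≫ incl i₀ ≫ d)
      have h1 : incl i₀ ≫ d = (incl i₀ ≫ d) ≫ α := by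
        have h1a : incl i₀ ≫ proj i₀ ≫ incl i₀ ≫ d = incl i₀ ≫ d := by
          rw [← Category.assoc, hip i₀, Category.id_comp]
        have h1b : incl i₀ ≫ proj i₀ ≫ incl i₀ ≫ d = incl i₀ ≫ d ≫ α := by
          rw [hα]
        calc incl i₀ ≫ d = incl i₀ ≫ proj i₀ ≫ incl i₀ ≫ d := h1a.symm
          _ = incl i₀ ≫ d ≫ α := h1b
          _ = (incl i₀ ≫ d) ≫ α := (Category.assoc _ _ _).symm
      have h2 : ∀ j, j ≠ i₀ → (incl j ≫ d) ≫ α = 0 := by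
        intro j hj
        have h2a : incl j ≫ proj i₀ ≫ incl i₀ ≫ d = 0 := by
          rw [← Category.assoc, hij j i₀ hj, zero_comp]
        have h2b : incl j ≫ proj i₀ ≫ incl i₀ ≫ d = incl j ≫ d ≫ α := by
          rw [hα]
        calc (incl j ≫ d) ≫ α = incl j ≫ d ≫ α := Category.assoc _ _ _
          _ = incl j ≫ proj i₀ ≫ incl i₀ ≫ d := h2b.symm
          _ = 0 := h2a
      rcases IsLocalRing.isUnit_or_isUnit_of_add_one
          (a := endOf α) (b := (1 : End E) - endOf α) (by abel) with hu | hu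
      · haveI : IsIso α := (isUnit_iff_isIso (endOf α)).mp hu
        intro j hj
        apply hZF
        have := h2 j hj
        calc incl j ≫ d = ((incl j ≫ d) ≫ α) ≫ inv α := by
              simp only [Category.assoc, IsIso.hom_inv_id, Category.comp_id]
          _ = 0 := by rw [this, zero_comp]
      · exfalso
        apply hi₀
        have hsub : ((1 : End E) - endOf α) = 𝟙 E - α := rfl
        rw [hsub] at hu
        haveI : IsIso (𝟙 E - α) := (isUnit_iff_isIso (endOf (𝟙 E - α))).mp hu
        have hz : (incl i₀ ≫ d) ≫ (𝟙 E - α) = 0 := by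
          rw [Preadditive.comp_sub, Category.comp_id, ← h1, sub_self]
        calc incl i₀ ≫ d = ((incl i₀ ≫ d) ≫ (𝟙 E - α)) ≫ inv (𝟙 E - α) := by
              simp only [Category.assoc, IsIso.hom_inv_id, Category.comp_id]
          _ = 0 := by rw [hz, zero_comp]
    -- N = n + 1
    obtain ⟨n, rfl⟩ : ∃ n, N = n + 1 := by
      rcases Nat.exists_eq_succ_of_ne_zero (n := N)
        (fun h0 => by subst h0; exact i₀.elim0) with ⟨n, hn⟩
      exact ⟨n, hn⟩
    obtain ⟨eiso⟩ := aux_biproduct_split Z i₀ F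
      (fun j => (hothers _ (Fin.succAbove_ne i₀ j)).some)
    exact ⟨Z i₀, 1, n, hZind i₀, le_refl 1, ⟨e ≪≫ eiso⟩⟩
  · -- all summands are isomorphic to F; in particular Ebar ≠ 0 gives the result
    push_neg at hex
    have hallF : ∀ j, Nonempty (Z j ≅ F) := fun j => hZF j (hex j)
    -- Ebar is not zero
    have hEbar : ¬ IsZero Ebar := by
      intro hz
      have hzT : IsZero (Triangle.mk a b c).obj₃ := hz
      haveI hIa : IsIso (Triangle.mk a b c).mor₁ :=
        (Triangle.isZero₃_iff_isIso₁ _ htri).mp hzT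
      have hIa' : IsIso a := hIa
      obtain ⟨nn, ii, pp, hipp⟩ := hF₀
      have hInd : IndecObj (E⟦(-1 : ℤ)⟧) := aux_indec_shift E hE
      have hiso := aux_retract_iso F (E⟦(-1 : ℤ)⟧) hInd.1 (hlocal _ hInd) (hlocal F hF)
        ⟨nn, a ≫ ii, pp ≫ inv a, by
          calc (a ≫ ii) ≫ pp ≫ inv a = a ≫ (ii ≫ pp) ≫ inv a := by
                simp only [Category.assoc]
            _ = 𝟙 _ := by rw [hipp]; simp⟩
      obtain ⟨w⟩ := hiso
      exact hne.elim (σ.symm ≪≫ (shiftFunctor C (1 : ℤ)).mapIso w)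
    have hN0 : N ≠ 0 := by
      intro h0
      subst h0
      apply hEbar
      refine (?_ : IsZero (⨁ Z)).of_iso e
      rw [IsZero.iff_id_eq_zero]
      apply biproduct.hom_ext
      intro j
      exact j.elim0
    obtain ⟨n, rfl⟩ : ∃ n, N = n + 1 := Nat.exists_eq_succ_of_ne_zero hN0
    obtain ⟨eiso⟩ := aux_biproduct_split Z 0 F (fun j => (hallF _).some)
    exact ⟨Z 0, 1, n, hZind 0, le_refl 1, ⟨e ≪≫ eiso⟩⟩
end
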